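/- For any alphabet X of variables and any integer k ≥ 1, the power sum p_k(X) = Σ_i x_i^k satisfies Waring's formula: p_k(X) = Σ_λ (−1)^{k − l(λ)} · k·(l(λ)−1)! / (∏_i m_i!) · e_1(X)^{m_1} · e_2(X)^{m_2} · ⋯, where the sum is over all partitions λ = 1^{m_1} 2^{m_2} ⋯ of k, l(λ) = m_1 + m_2 + ⋯ is the number of parts, and e_j(X) denotes the j-th elementary symmetric polynomial. -/

import Mathlib

open Finset

open MvPolynomial

namespace WaringAux

/-- coefficient of a partition -/
noncomputable def c {n : ℕ} (μ : Nat.Partition n) : ℚ :=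
  (-1 : ℚ) ^ (n - μ.parts.card) * n * (μ.parts.card - 1).factorial /
    ∏ i ∈ μ.parts.toFinset, (μ.parts.count i).factorial

noncomputable def E (σ : Type*) [Fintype σ] {n : ℕ} (μ : Nat.Partition n) :
    MvPolynomial σ ℚ :=
  (μ.parts.map (esymm σ ℚ)).prod

lemma card_le_sum {n : ℕ} (μ : Nat.Partition n) : μ.parts.card ≤ n := by
  classical
  calc μ.parts.card = (μ.parts.map (fun _ => 1)).sum := by simp
    _ ≤ (μ.parts.map id).sum := Multiset.sum_map_le_sum_map _ _ (fun x hx => μ.parts_pos hx)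
    _ = n := by rw [Multiset.map_id, μ.parts_sum]

lemma part_le {n : ℕ} (μ : Nat.Partition n) {i : ℕ} (h : i ∈ μ.parts) : i ≤ n := by
  rw [← μ.parts_sum]
  exact Multiset.single_le_sum (fun x _ => Nat.zero_le x) i h

/-- insert a part -/
def insertP (k i : ℕ) (hi : 0 < i) (μ : Nat.Partition (k - i)) (hik : i ≤ k) :
    Nat.Partition k where
  parts := i ::ₘ μ.parts
  parts_pos := by
    intro j hj
    rcases Multiset.mem_cons.mp hj with h | h
    · omega
    · exact μ.parts_pos h
  parts_sum := by
    rw [Multiset.sum_cons, μ.parts_sum]; omega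

/-- erase a part -/
def eraseP {k : ℕ} (l : Nat.Partition k) (i : ℕ) (hi : i ∈ l.parts) :
    Nat.Partition (k - i) where
  parts := l.parts.erase i
  parts_pos := fun h => l.parts_pos (Multiset.mem_of_mem_erase h)
  parts_sum := by
    have := l.parts_sum
    have h2 := Multiset.cons_erase hi
    have : i + (l.parts.erase i).sum = k := by
      conv_rhs => rw [← this, ← h2]
      rw [Multiset.sum_cons]
    omega


lemma prod_range_eq {M : Type*} [CommMonoid M] {k : ℕ} (μ : Nat.Partition k)
    (f : ℕ → ℕ → M) (hf : ∀ i, f i 0 = 1) :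
    ∏ i ∈ range (k + 1), f i (μ.parts.count i) =
      ∏ i ∈ μ.parts.toFinset, f i (μ.parts.count i) := by
  refine (Finset.prod_subset ?_ ?_).symm
  · intro i hi
    rw [Multiset.mem_toFinset] at hi
    exact Finset.mem_range.mpr (Nat.lt_succ_of_le (part_le μ hi))
  · intro i _ hi
    rw [Multiset.mem_toFinset] at hi
    rw [Multiset.count_eq_zero_of_notMem hi, hf]

lemma E_eq (σ : Type*) [Fintype σ] {k : ℕ} (μ : Nat.Partition k) :
    ∏ i ∈ range (k + 1), esymm σ ℚ i ^ μ.parts.count i = E σ μ := by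
  rw [prod_range_eq μ (fun i m => esymm σ ℚ i ^ m) (fun i => pow_zero _), E,
    Finset.prod_multiset_map_count]

lemma fac_eq {k : ℕ} (μ : Nat.Partition k) :
    ∏ i ∈ range (k + 1), (μ.parts.count i).factorial =
      ∏ i ∈ μ.parts.toFinset, (μ.parts.count i).factorial :=
  prod_range_eq μ (fun _ m => m.factorial) (fun _ => rfl)

lemma D_pos {k : ℕ} (μ : Nat.Partition k) :
    0 < ∏ i ∈ μ.parts.toFinset, (μ.parts.count i).factorial :=
  Finset.prod_pos fun i _ => Nat.factorial_pos _

/-- total-function version of the coefficient of the partition obtained by erasing part `i`,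
multiplied by `(-1)^i`. -/
noncomputable def cer {k : ℕ} (l : Nat.Partition k) (i : ℕ) : ℚ :=
  (-1 : ℚ) ^ ((k - i) - (l.parts.card - 1)) * (k - i) * (l.parts.card - 1 - 1).factorial /
    ∏ j ∈ (l.parts.erase i).toFinset, ((l.parts.erase i).count j).factorial

lemma c_eraseP {k : ℕ} (l : Nat.Partition k) {i : ℕ} (hi : i ∈ l.parts) :
    c (eraseP l i hi) = cer l i := by
  have hc : (l.parts.erase i).card = l.parts.card - 1 := by
    rw [Multiset.card_erase_of_mem hi]; rfl
  simp only [c, cer, eraseP, hc]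
  rw [Nat.cast_sub (part_le l hi)]


lemma prod_erase_toFinset {k : ℕ} (l : Nat.Partition k) (i : ℕ) :
    ∏ j ∈ (l.parts.erase i).toFinset, ((l.parts.erase i).count j).factorial =
      ∏ j ∈ l.parts.toFinset, ((l.parts.erase i).count j).factorial := by
  refine Finset.prod_subset ?_ ?_
  · exact Multiset.toFinset_subset.mpr (Multiset.subset_of_le (Multiset.erase_le i l.parts))
  · intro x _ hx
    rw [Multiset.mem_toFinset] at hx
    rw [Multiset.count_eq_zero_of_notMem hx]
    rfl

lemma D_erase {k : ℕ} (l : Nat.Partition k) {i : ℕ} (hi : i ∈ l.parts) :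
    l.parts.count i * ∏ j ∈ l.parts.toFinset, ((l.parts.erase i).count j).factorial =
      ∏ j ∈ l.parts.toFinset, (l.parts.count j).factorial := by
  have hi' : i ∈ l.parts.toFinset := Multiset.mem_toFinset.mpr hi
  rw [← Finset.mul_prod_erase _ _ hi',
    ← Finset.mul_prod_erase _ (fun j => (l.parts.count j).factorial) hi']
  have h1 : ∏ j ∈ l.parts.toFinset.erase i, ((l.parts.erase i).count j).factorial =
      ∏ j ∈ l.parts.toFinset.erase i, (l.parts.count j).factorial :=
    Finset.prod_congr rfl fun j hj =>
      by rw [Multiset.count_erase_of_ne (Finset.ne_of_mem_erase hj)]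
  rw [h1, ← mul_assoc]
  congr 1
  rw [Multiset.count_erase_self]
  obtain ⟨m, hm⟩ : ∃ m, l.parts.count i = m + 1 :=
    ⟨l.parts.count i - 1, by have := Multiset.count_pos.mpr hi; omega⟩
  rw [hm]
  simp [Nat.factorial_succ, Nat.mul_comm]

lemma key {k : ℕ} (l : Nat.Partition k) (hl : 2 ≤ l.parts.card) :
    ∑ i ∈ l.parts.toFinset, (-1 : ℚ) ^ i * cer l i = - c l := by
  classical
  set L := l.parts.card with hL
  set D := ∏ j ∈ l.parts.toFinset, (l.parts.count j).factorial with hD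
  have hD0 : (D : ℚ) ≠ 0 := by exact_mod_cast (D_pos l).ne'
  have hLk : L ≤ k := card_le_sum l
  clear_value L D
  have step : ∀ i ∈ l.parts.toFinset, (-1 : ℚ) ^ i * cer l i =
      (-1 : ℚ) ^ (k - L) * (-1) *
        (((k - i) * (L - 1 - 1).factorial * l.parts.count i : ℕ) : ℚ) / D := by
    intro i hi'
    have hi : i ∈ l.parts := Multiset.mem_toFinset.mp hi'
    have hik : i ≤ k := part_le l hi
    have hcard : (l.parts.erase i).card = L - 1 := by
      rw [Multiset.card_erase_of_mem hi, hL]; rfl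
    have hles : L - 1 ≤ k - i := by
      have := card_le_sum (eraseP l i hi)
      simpa [eraseP, hcard] using this
    have hcnt : 0 < l.parts.count i := Multiset.count_pos.mpr hi
    set Di := ∏ j ∈ (l.parts.erase i).toFinset, ((l.parts.erase i).count j).factorial with hDidef
    have hDi : l.parts.count i * Di = D := by
      rw [hDidef, prod_erase_toFinset, D_erase l hi, hD]
    have hDi0 : (Di : ℚ) ≠ 0 := by
      have : 0 < Di := Finset.prod_pos fun _ _ => Nat.factorial_pos _
      exact_mod_cast this.ne'
    have hDQ : (l.parts.count i : ℚ) * Di = D := by exact_mod_cast hDi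
    have hsign : (-1 : ℚ) ^ i * (-1 : ℚ) ^ ((k - i) - (L - 1)) =
        (-1 : ℚ) ^ (k - L) * (-1) := by
      rw [← pow_add]
      have he : i + ((k - i) - (L - 1)) = (k - L) + 1 := by omega
      rw [he, pow_add, pow_one]
    have e1 : (((k - i) * (L - 1 - 1).factorial * l.parts.count i : ℕ) : ℚ) =
        ((k : ℚ) - i) * (L - 1 - 1).factorial * l.parts.count i := by
      push_cast [Nat.cast_sub hik]; ring
    rw [cer, ← hL, ← hDidef, e1, mul_div_assoc',
      div_eq_div_iff hDi0 hD0, ← hDQ, ← hsign]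
    ring
  rw [Finset.sum_congr rfl step]
  rw [← Finset.sum_div, ← Finset.mul_sum, ← Nat.cast_sum]
  have hsum1 : ∑ i ∈ l.parts.toFinset, l.parts.count i = L := by
    rw [hL]; exact Multiset.toFinset_sum_count_eq _
  have hsum2 : ∑ i ∈ l.parts.toFinset, i * l.parts.count i = k := by
    have := Finset.sum_multiset_map_count l.parts (id : ℕ → ℕ)
    simp only [Multiset.map_id', l.parts_sum, smul_eq_mul, id] at this
    refine Eq.trans (Finset.sum_congr rfl fun i _ => Nat.mul_comm _ _) this.symm
  have h1 : ∑ i ∈ l.parts.toFinset, (k - i) * l.parts.count i = k * (L - 1) := by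
    have h2 : ∑ i ∈ l.parts.toFinset,
        ((k - i) * l.parts.count i + i * l.parts.count i) = k * L := by
      have : ∀ i ∈ l.parts.toFinset,
          (k - i) * l.parts.count i + i * l.parts.count i = k * l.parts.count i := by
        intro i hi'
        have hik : i ≤ k := part_le l (Multiset.mem_toFinset.mp hi')
        have : (k - i) + i = k := by omega
        rw [← Nat.add_mul, this]
      rw [Finset.sum_congr rfl this, ← Finset.mul_sum, hsum1]
    rw [Finset.sum_add_distrib, hsum2] at h2
    have hkL : k * (L - 1) + k = k * L := by
      obtain ⟨m, rfl⟩ : ∃ m, L = m + 1 := ⟨L - 1, by omega⟩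
      simp [Nat.mul_succ]
    omega
  have hmain : ∑ i ∈ l.parts.toFinset,
      (k - i) * (L - 1 - 1).factorial * l.parts.count i = k * (L - 1).factorial := by
    calc ∑ i ∈ l.parts.toFinset, (k - i) * (L - 1 - 1).factorial * l.parts.count i
        = (∑ i ∈ l.parts.toFinset, (k - i) * l.parts.count i) * (L - 1 - 1).factorial := by
          rw [Finset.sum_mul]; exact Finset.sum_congr rfl fun i _ => by ring
      _ = k * (L - 1) * (L - 1 - 1).factorial := by rw [h1]
      _ = k * (L - 1).factorial := by
          obtain ⟨m, hm⟩ : ∃ m, L = m + 2 := ⟨L - 2, by omega⟩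
          rw [hm]
          simp only [Nat.add_sub_cancel, Nat.succ_sub_one, Nat.factorial_succ]
          ring
  rw [hmain, c, ← hL, ← hD]
  push_cast
  ring


lemma eq_indiscrete_of_card_le_one {k : ℕ} (hk : 1 ≤ k) (l : Nat.Partition k)
    (h : l.parts.card ≤ 1) : l = Nat.Partition.indiscrete k := by
  have h1 : l.parts.card = 1 := by
    rcases Nat.lt_or_ge l.parts.card 1 with h' | h'
    · exfalso
      have h0 : l.parts = 0 := Multiset.card_eq_zero.mp (by omega)
      have hs := l.parts_sum
      rw [h0, Multiset.sum_zero] at hs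
      omega
    · omega
  obtain ⟨a, ha⟩ := Multiset.card_eq_one.mp h1
  have hsum := l.parts_sum
  rw [ha] at hsum
  simp at hsum
  ext1
  rw [ha, hsum, Nat.Partition.indiscrete_parts (by omega)]

lemma two_le_card {k : ℕ} (hk : 1 ≤ k) (l : Nat.Partition k)
    (h : l ≠ Nat.Partition.indiscrete k) : 2 ≤ l.parts.card := by
  by_contra h'
  exact h (eq_indiscrete_of_card_le_one hk l (by omega))

lemma part_lt_of_two_le {k : ℕ} (l : Nat.Partition k) (h2 : 2 ≤ l.parts.card)
    {i : ℕ} (hi : i ∈ l.parts) : i < k := by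
  have hik : i ≤ k := part_le l hi
  rcases Nat.lt_or_ge i k with h | h
  · exact h
  · exfalso
    have h1 : (l.parts.erase i).card = l.parts.card - 1 := by
      rw [Multiset.card_erase_of_mem hi]; rfl
    have h3 := card_le_sum (eraseP l i hi)
    simp only [eraseP, h1] at h3
    omega

lemma c_smul_E_indiscrete (σ : Type*) [Fintype σ] {k : ℕ} (hk : 1 ≤ k) :
    c (Nat.Partition.indiscrete k) • E σ (Nat.Partition.indiscrete k) =
      (-1 : MvPolynomial σ ℚ) ^ (k + 1) * k * esymm σ ℚ k := by
  have hp : (Nat.Partition.indiscrete k).parts = {k} :=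
    Nat.Partition.indiscrete_parts (by omega)
  have hpow : (-1 : MvPolynomial σ ℚ) ^ (k + 1) = (-1) ^ (k - 1) := by
    obtain ⟨m, rfl⟩ : ∃ m, k = m + 1 := ⟨k - 1, by omega⟩
    rw [show m + 1 + 1 = m + 2 by rfl, pow_add, Nat.add_sub_cancel, neg_one_sq, mul_one]
  rw [c, E, hp, hpow]
  simp only [Multiset.toFinset_singleton, Finset.prod_singleton, Multiset.card_singleton,
    Multiset.count_singleton_self, Nat.factorial_one, Nat.sub_self, Nat.factorial_zero,
    Multiset.map_singleton, Multiset.prod_singleton, Nat.cast_one, mul_one, div_one]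
  rw [smul_eq_C_mul]
  show MvPolynomial.C _ * _ = _
  rw [map_mul, map_pow, map_neg, map_one, map_natCast]


lemma cer_insertP {k i : ℕ} (hi : 0 < i) (hik : i ≤ k) (μ : Nat.Partition (k - i)) :
    cer (insertP k i hi μ hik) i = c μ := by
  simp only [cer, insertP, c, Multiset.erase_cons_head, Multiset.card_cons, Nat.add_sub_cancel]
  rw [Nat.cast_sub hik]

lemma E_insertP (σ : Type*) [Fintype σ] {k i : ℕ} (hi : 0 < i) (hik : i ≤ k)
    (μ : Nat.Partition (k - i)) :
    E σ (insertP k i hi μ hik) = esymm σ ℚ i * E σ μ := by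
  simp [E, insertP]

theorem main (σ : Type*) [Fintype σ] :
    ∀ k : ℕ, 1 ≤ k → psum σ ℚ k = ∑ l : Nat.Partition k, c l • E σ l := by
  intro k
  induction k using Nat.strong_induction_on with
  | _ k ih =>
  intro hk
  classical
  rw [psum_eq_mul_esymm_sub_sum σ ℚ k hk]
  -- rewrite the antidiagonal sum as a sum over `Ioo 0 k`
  have h1 : ∑ a ∈ antidiagonal k with a.1 ∈ Set.Ioo 0 k,
      (-1) ^ a.1 * esymm σ ℚ a.1 * psum σ ℚ a.2 =
      ∑ i ∈ Finset.Ioo 0 k, (-1) ^ i * esymm σ ℚ i * psum σ ℚ (k - i) := by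
    refine Finset.sum_nbij' (fun a => a.1) (fun i => (i, k - i)) ?_ ?_ ?_ ?_ ?_
    · intro a ha
      simp only [Finset.mem_filter, Finset.HasAntidiagonal.mem_antidiagonal, Set.mem_Ioo] at ha
      exact Finset.mem_Ioo.mpr ha.2
    · intro i hi
      simp only [Finset.mem_Ioo] at hi
      simp only [Finset.mem_filter, Finset.HasAntidiagonal.mem_antidiagonal, Set.mem_Ioo]
      exact ⟨by omega, hi⟩
    · intro a ha
      simp only [Finset.mem_filter, Finset.HasAntidiagonal.mem_antidiagonal, Set.mem_Ioo] at ha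
      have : k - a.1 = a.2 := by omega
      simp [this]
    · intro i hi
      rfl
    · intro a ha
      simp only [Finset.mem_filter, Finset.HasAntidiagonal.mem_antidiagonal, Set.mem_Ioo] at ha
      have : k - a.1 = a.2 := by omega
      rw [this]
  rw [h1]
  -- apply the inductive hypothesis and push products inside
  have h2 : ∑ i ∈ Finset.Ioo 0 k, (-1) ^ i * esymm σ ℚ i * psum σ ℚ (k - i) =
      ∑ i ∈ Finset.Ioo 0 k, ∑ μ : Nat.Partition (k - i),
        ((-1 : ℚ) ^ i * c μ) • (esymm σ ℚ i * E σ μ) := by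
    refine Finset.sum_congr rfl fun i hi => ?_
    rw [Finset.mem_Ioo] at hi
    rw [ih (k - i) (by omega) (by omega), Finset.mul_sum]
    refine Finset.sum_congr rfl fun μ _ => ?_
    rw [smul_eq_C_mul, smul_eq_C_mul, map_mul, map_pow, map_neg, map_one]
    ring
  rw [h2]
  -- the bijection between pairs and partitions with a marked part
  have h3 : ∑ i ∈ Finset.Ioo 0 k, ∑ μ : Nat.Partition (k - i),
        ((-1 : ℚ) ^ i * c μ) • (esymm σ ℚ i * E σ μ) =
      ∑ l : Nat.Partition k, ∑ i ∈ l.parts.toFinset with i < k,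
        ((-1 : ℚ) ^ i * cer l i) • E σ l := by
    rw [Finset.sum_sigma', Finset.sum_sigma']
    refine Finset.sum_bij'
      (fun a ha => (⟨insertP k a.1
          (Finset.mem_Ioo.mp (Finset.mem_sigma.mp ha).1).1 a.2
          (le_of_lt (Finset.mem_Ioo.mp (Finset.mem_sigma.mp ha).1).2), a.1⟩ :
            Σ _ : Nat.Partition k, ℕ))
      (fun b hb => (⟨b.2, eraseP b.1 b.2
          (Multiset.mem_toFinset.mp (Finset.mem_filter.mp (Finset.mem_sigma.mp hb).2).1)⟩ :
            Σ i : ℕ, Nat.Partition (k - i)))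
      ?_ ?_ ?_ ?_ ?_
    · intro a ha
      have h1 := Finset.mem_Ioo.mp (Finset.mem_sigma.mp ha).1
      refine Finset.mem_sigma.mpr ⟨Finset.mem_univ _, ?_⟩
      refine Finset.mem_filter.mpr ⟨?_, h1.2⟩
      exact Multiset.mem_toFinset.mpr (Multiset.mem_cons_self _ _)
    · intro b hb
      have h2 := Finset.mem_filter.mp (Finset.mem_sigma.mp hb).2
      have hmem : b.2 ∈ b.1.parts := Multiset.mem_toFinset.mp h2.1
      refine Finset.mem_sigma.mpr ⟨?_, Finset.mem_univ _⟩
      exact Finset.mem_Ioo.mpr ⟨b.1.parts_pos hmem, h2.2⟩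
    · intro a ha
      obtain ⟨i, μ⟩ := a
      refine Sigma.ext rfl (heq_of_eq ?_)
      apply Nat.Partition.ext
      exact Multiset.erase_cons_head i μ.parts
    · intro b hb
      obtain ⟨l, i⟩ := b
      have h2 := Finset.mem_filter.mp (Finset.mem_sigma.mp hb).2
      have hmem : i ∈ l.parts := Multiset.mem_toFinset.mp h2.1
      refine Sigma.ext ?_ (heq_of_eq ?_)
      · apply Nat.Partition.ext
        exact Multiset.cons_erase hmem
      · rfl
    · intro a ha
      obtain ⟨i, μ⟩ := a
      have h1 := Finset.mem_Ioo.mp (Finset.mem_sigma.mp ha).1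
      rw [cer_insertP h1.1 (le_of_lt h1.2) μ, E_insertP σ h1.1 (le_of_lt h1.2) μ]
  rw [h3]
  -- evaluate the inner sums
  have h4 : ∑ l : Nat.Partition k, ∑ i ∈ l.parts.toFinset with i < k,
        ((-1 : ℚ) ^ i * cer l i) • E σ l =
      (- ∑ l : Nat.Partition k, c l • E σ l) +
        c (Nat.Partition.indiscrete k) • E σ (Nat.Partition.indiscrete k) := by
    have hterm : ∀ l : Nat.Partition k,
        (∑ i ∈ l.parts.toFinset with i < k, ((-1 : ℚ) ^ i * cer l i) • E σ l) =
          - (c l • E σ l) +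
            (if l = Nat.Partition.indiscrete k then c l • E σ l else 0) := by
      intro l
      by_cases hl : l = Nat.Partition.indiscrete k
      · subst hl
        rw [if_pos rfl]
        have hp : (Nat.Partition.indiscrete k).parts = {k} :=
          Nat.Partition.indiscrete_parts (by omega)
        rw [hp]
        rw [show ({k} : Multiset ℕ).toFinset = {k} from Multiset.toFinset_singleton k]
        rw [Finset.filter_singleton]
        simp
      · rw [if_neg hl]
        have h2 := two_le_card hk l hl
        have hfil : (l.parts.toFinset.filter (· < k)) = l.parts.toFinset :=
          Finset.filter_true_of_mem fun i hi =>
            part_lt_of_two_le l h2 (Multiset.mem_toFinset.mp hi)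
        rw [hfil, ← Finset.sum_smul, key l h2]
        simp [neg_smul]
    rw [Finset.sum_congr rfl fun l _ => hterm l, Finset.sum_add_distrib,
      Finset.sum_neg_distrib, Finset.sum_ite_eq' Finset.univ
        (Nat.Partition.indiscrete k) (fun l => c l • E σ l)]
    simp
  rw [h4, c_smul_E_indiscrete σ hk]
  ring

end WaringAux

/-- Waring's formula: the power sum `p_k` expressed in terms of the elementary
symmetric polynomials, the sum ranging over all partitions
`λ = 1^{m₁} 2^{m₂} ⋯` of `k`, with `l(λ)` the number of parts. -/
theorem stmt_2 (σ : Type*) [Fintype σ] (k : ℕ) (hk : 1 ≤ k) :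
    MvPolynomial.psum σ ℚ k =
      ∑ l : Nat.Partition k,
        ((-1 : ℚ) ^ (k - l.parts.card) * k * (l.parts.card - 1).factorial /
          ∏ i ∈ Finset.range (k + 1), (l.parts.count i).factorial) •
          ∏ i ∈ Finset.range (k + 1),
            MvPolynomial.esymm σ ℚ i ^ l.parts.count i := by
  rw [WaringAux.main σ k hk]
  refine Finset.sum_congr rfl fun l _ => ?_
  rw [WaringAux.E_eq σ l, WaringAux.fac_eq l]
  rfl
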